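/- Let A ⊆ ℝ^d be open, C ⊂ A closed, and H an open affine half-space with σ_H(C) ⊂ A. Then P^H(C) ⊂ P_H(A), and consequently the topological boundary of P_H(A \ C) equals the disjoint union ∂P_H(A) ⊔ ∂P^H(C). -/

import Mathlib

open Set Metric MeasureTheory
open scoped ENNReal

noncomputable def sigmaH {d : ℕ} (h : EuclideanSpace ℝ (Fin d)) (c : ℝ)
    (x : EuclideanSpace ℝ (Fin d)) : EuclideanSpace ℝ (Fin d) :=
  x + (2 * (c - (inner ℝ x h : ℝ))) • h

def halfSp {d : ℕ} (h : EuclideanSpace ℝ (Fin d)) (c : ℝ) :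
    Set (EuclideanSpace ℝ (Fin d)) :=
  {x | (inner ℝ x h : ℝ) < c}

noncomputable def polz {d : ℕ} (h : EuclideanSpace ℝ (Fin d)) (c : ℝ)
    (A : Set (EuclideanSpace ℝ (Fin d))) : Set (EuclideanSpace ℝ (Fin d)) :=
  ((A ∪ sigmaH h c '' A) ∩ halfSp h c) ∪ (A ∩ sigmaH h c '' A)

noncomputable def dpolz {d : ℕ} (h : EuclideanSpace ℝ (Fin d)) (c : ℝ)
    (A : Set (EuclideanSpace ℝ (Fin d))) : Set (EuclideanSpace ℝ (Fin d)) :=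
  ((A ∪ sigmaH h c '' A) ∩ (halfSp h c)ᶜ) ∪ (A ∩ sigmaH h c '' A)

lemma sigma_inner {d : ℕ} (h : EuclideanSpace ℝ (Fin d)) (c : ℝ) (hh : ‖h‖ = 1)
    (x : EuclideanSpace ℝ (Fin d)) :
    (inner ℝ (sigmaH h c x) h : ℝ) = 2 * c - inner ℝ x h := by
  have h1 : (inner ℝ h h : ℝ) = 1 := by
    rw [real_inner_self_eq_norm_sq, hh]; norm_num
  rw [sigmaH, inner_add_left, real_inner_smul_left, h1]
  ring

lemma sigma_invol {d : ℕ} (h : EuclideanSpace ℝ (Fin d)) (c : ℝ) (hh : ‖h‖ = 1)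
    (x : EuclideanSpace ℝ (Fin d)) : sigmaH h c (sigmaH h c x) = x := by
  have h1 := sigma_inner h c hh x
  rw [sigmaH, h1, sigmaH]
  module

lemma sigma_cont {d : ℕ} (h : EuclideanSpace ℝ (Fin d)) (c : ℝ) :
    Continuous (sigmaH h c) := by
  unfold sigmaH
  exact continuous_id.add
    ((continuous_const.mul (continuous_const.sub (continuous_id.inner (𝕜 := ℝ) continuous_const))).smul
      continuous_const)

lemma mem_sigma_image {d : ℕ} (h : EuclideanSpace ℝ (Fin d)) (c : ℝ) (hh : ‖h‖ = 1)
    (S : Set (EuclideanSpace ℝ (Fin d))) (x : EuclideanSpace ℝ (Fin d)) :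
    x ∈ sigmaH h c '' S ↔ sigmaH h c x ∈ S := by
  constructor
  · rintro ⟨y, hy, rfl⟩
    rwa [sigma_invol h c hh]
  · intro hx
    exact ⟨sigmaH h c x, hx, sigma_invol h c hh x⟩

lemma sigma_image_eq_preimage {d : ℕ} (h : EuclideanSpace ℝ (Fin d)) (c : ℝ) (hh : ‖h‖ = 1)
    (S : Set (EuclideanSpace ℝ (Fin d))) :
    sigmaH h c '' S = sigmaH h c ⁻¹' S := by
  ext x; exact mem_sigma_image h c hh S x

lemma halfSp_open {d : ℕ} (h : EuclideanSpace ℝ (Fin d)) (c : ℝ) :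
    IsOpen (halfSp h c) :=
  isOpen_lt (continuous_id.inner continuous_const) continuous_const

lemma polz_open {d : ℕ} (h : EuclideanSpace ℝ (Fin d)) (c : ℝ) (hh : ‖h‖ = 1)
    {A : Set (EuclideanSpace ℝ (Fin d))} (hA : IsOpen A) : IsOpen (polz h c A) := by
  rw [polz, sigma_image_eq_preimage h c hh]
  have hσA : IsOpen (sigmaH h c ⁻¹' A) := hA.preimage (sigma_cont h c)
  exact ((hA.union hσA).inter (halfSp_open h c)).union (hA.inter hσA)

lemma dpolz_closed {d : ℕ} (h : EuclideanSpace ℝ (Fin d)) (c : ℝ) (hh : ‖h‖ = 1)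
    {C : Set (EuclideanSpace ℝ (Fin d))} (hC : IsClosed C) : IsClosed (dpolz h c C) := by
  rw [dpolz, sigma_image_eq_preimage h c hh]
  have hσC : IsClosed (sigmaH h c ⁻¹' C) := hC.preimage (sigma_cont h c)
  exact ((hC.union hσC).inter (halfSp_open h c).isClosed_compl).union (hC.inter hσC)

lemma frontier_diff_open_closed {X : Type*} [TopologicalSpace X] {U K : Set X}
    (hU : IsOpen U) (hK : IsClosed K) (hKU : K ⊆ U) :
    frontier (U \ K) = frontier U ∪ frontier K ∧ Disjoint (frontier U) (frontier K) := by
  have hcl : closure (U \ K) = closure U \ interior K := by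
    apply Subset.antisymm
    · apply closure_minimal
      · exact fun x hx => ⟨subset_closure hx.1, fun hxK => hx.2 (interior_subset hxK)⟩
      · exact isClosed_closure.sdiff isOpen_interior
    · rintro x ⟨hx1, hx2⟩
      rw [_root_.mem_closure_iff]
      intro N hN hxN
      by_cases hxU : x ∈ U
      · have hsub : ¬(N ∩ U ⊆ K) := by
          intro hsub
          exact hx2 (interior_maximal hsub (hN.inter hU) ⟨hxN, hxU⟩ :)
        obtain ⟨y, hy⟩ := not_subset.mp hsub
        exact ⟨y, hy.1.1, hy.1.2, hy.2⟩
      · have hxK : x ∉ K := fun hk => hxU (hKU hk)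
        rw [_root_.mem_closure_iff] at hx1
        obtain ⟨y, hy, hyU⟩ := hx1 (N ∩ Kᶜ) (hN.inter hK.isOpen_compl) ⟨hxN, hxK⟩
        exact ⟨y, hy.1, hyU, hy.2⟩
  have hfr : frontier (U \ K) = closure (U \ K) \ (U \ K) :=
    (hU.sdiff hK).frontier_eq
  have hfrU : frontier U = closure U \ U := hU.frontier_eq
  have hfrK : frontier K = K \ interior K := hK.frontier_eq
  constructor
  · rw [hfr, hcl, hfrU, hfrK]
    ext x
    have h1 : x ∈ K → x ∈ U := fun hx => hKU hx
    have h2 : x ∈ U → x ∈ closure U := fun hx => subset_closure hx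
    have h3 : x ∈ interior K → x ∈ K := fun hx => interior_subset hx
    simp only [mem_diff, mem_union]
    tauto
  · rw [hfrU]
    rw [Set.disjoint_left]
    intro x hx hx'
    exact hx.2 (hKU (hK.frontier_subset hx'))

set_option maxHeartbeats 1000000 in
theorem polz_diff {d : ℕ} (h : EuclideanSpace ℝ (Fin d)) (c : ℝ) (hh : ‖h‖ = 1)
    (A C : Set (EuclideanSpace ℝ (Fin d)))
    (hCA : C ⊆ A) (hσ : sigmaH h c '' C ⊆ A) :
    polz h c (A \ C) = polz h c A \ dpolz h c C := by
  ext x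
  have hc1 : x ∈ C → x ∈ A := fun hx => hCA hx
  have hc2 : sigmaH h c x ∈ C → sigmaH h c x ∈ A := fun hx => hCA hx
  have hc3 : sigmaH h c x ∈ C → x ∈ A := fun hx =>
    hσ ((mem_sigma_image h c hh C x).mpr hx)
  have hc4 : x ∈ C → sigmaH h c x ∈ A := fun hx => by
    apply hσ
    rw [mem_sigma_image h c hh C (sigmaH h c x), sigma_invol h c hh]
    exact hx
  simp only [polz, dpolz, mem_union, mem_inter_iff, mem_diff, mem_compl_iff,
    mem_sigma_image h c hh]
  tauto

/-- Boundary decomposition for the polarization of a punctured domain. -/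
theorem stmt13 {d : ℕ} (h : EuclideanSpace ℝ (Fin d)) (c : ℝ) (hh : ‖h‖ = 1)
    (A C : Set (EuclideanSpace ℝ (Fin d))) (hA : IsOpen A) (hC : IsClosed C)
    (hCA : C ⊆ A) (hσ : sigmaH h c '' C ⊆ A) :
    dpolz h c C ⊆ polz h c A ∧
    frontier (polz h c (A \ C)) = frontier (polz h c A) ∪ frontier (dpolz h c C) ∧
    Disjoint (frontier (polz h c A)) (frontier (dpolz h c C)) := by
  have hsub : dpolz h c C ⊆ polz h c A := by
    intro x hx
    have hc1 : x ∈ C → x ∈ A := fun hx => hCA hx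
    have hc3 : sigmaH h c x ∈ C → x ∈ A := fun hx =>
      hσ ((mem_sigma_image h c hh C x).mpr hx)
    have hc4 : x ∈ C → sigmaH h c x ∈ A := fun hx => by
      apply hσ
      rw [mem_sigma_image h c hh C (sigmaH h c x), sigma_invol h c hh]
      exact hx
    have hc2 : sigmaH h c x ∈ C → sigmaH h c x ∈ A := fun hx => hCA hx
    simp only [polz, dpolz, mem_union, mem_inter_iff, mem_compl_iff,
      mem_sigma_image h c hh] at hx ⊢
    tauto
  have hfd := frontier_diff_open_closed (polz_open h c hh hA) (dpolz_closed h c hh hC) hsub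
  refine ⟨hsub, ?_, hfd.2⟩
  rw [polz_diff h c hh A C hCA hσ]
  exact hfd.1
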